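/- The power series f(z) = Σ_{m≥1} a_m z^m where a_m ∼ (2/m)·((1+√5)/2)^m (asymptotic equivalence of coefficients), with a_m ∈ ℕ, is transcendental over ℚ(z); i.e., a power series with natural number coefficients asymptotic to c·ρ^m/m with ρ = (1+√5)/2 and c = 2 cannot be algebraic over the field of rational functions ℚ(z). -/

import Mathlib

open Filter Polynomial Finset Real Topology

noncomputable section Stmt15Aux

namespace Stmt15

/-! ### Power series evaluation toolkit -/

def sAt (h : PowerSeries ℝ) (x : ℝ) : Prop :=
  Summable (fun m : ℕ => ‖(PowerSeries.coeff (R := ℝ) m h) * x ^ m‖)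

def ev (h : PowerSeries ℝ) (x : ℝ) : ℝ := ∑' m : ℕ, (PowerSeries.coeff (R := ℝ) m h) * x ^ m

lemma coeff_mul_pow (h1 h2 : PowerSeries ℝ) (x : ℝ) (m : ℕ) :
    (PowerSeries.coeff (R := ℝ) m (h1 * h2)) * x ^ m =
      ∑ kl ∈ Finset.HasAntidiagonal.antidiagonal m,
        ((PowerSeries.coeff (R := ℝ) kl.1 h1) * x ^ kl.1) * ((PowerSeries.coeff (R := ℝ) kl.2 h2) * x ^ kl.2) := by
  rw [PowerSeries.coeff_mul, Finset.sum_mul]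
  refine Finset.sum_congr rfl fun p hp => ?_
  rw [← Finset.HasAntidiagonal.mem_antidiagonal.mp hp, pow_add]; ring

lemma sAt.mul {h1 h2 : PowerSeries ℝ} {x : ℝ} (H1 : sAt h1 x) (H2 : sAt h2 x) :
    sAt (h1 * h2) x := by
  have := summable_norm_sum_mul_antidiagonal_of_summable_norm H1 H2
  refine this.congr fun m => ?_
  rw [← coeff_mul_pow]

lemma ev_mul {h1 h2 : PowerSeries ℝ} {x : ℝ} (H1 : sAt h1 x) (H2 : sAt h2 x) :
    ev (h1 * h2) x = ev h1 x * ev h2 x := by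
  unfold ev
  rw [tsum_mul_tsum_eq_tsum_sum_antidiagonal_of_summable_norm H1 H2]
  exact tsum_congr fun m => coeff_mul_pow h1 h2 x m

lemma sAt_one (x : ℝ) : sAt 1 x := by
  refine summable_of_ne_finset_zero (s := {0}) fun m hm => ?_
  simp only [Finset.mem_singleton] at hm
  simp [PowerSeries.coeff_one, hm]

lemma ev_one (x : ℝ) : ev 1 x = 1 := by
  unfold ev
  rw [tsum_eq_single 0 (fun m hm => by simp [PowerSeries.coeff_one, hm])]
  simp

lemma sAt_pow {h : PowerSeries ℝ} {x : ℝ} (H : sAt h x) (i : ℕ) : sAt (h ^ i) x := by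
  induction i with
  | zero => simpa using sAt_one x
  | succ i ih => rw [pow_succ]; exact ih.mul H

lemma ev_pow {h : PowerSeries ℝ} {x : ℝ} (H : sAt h x) (i : ℕ) :
    ev (h ^ i) x = (ev h x) ^ i := by
  induction i with
  | zero => simpa using ev_one x
  | succ i ih => rw [pow_succ, ev_mul (sAt_pow H i) H, ih, pow_succ]

lemma sAt_poly (P : ℝ[X]) (x : ℝ) : sAt (↑P : PowerSeries ℝ) x := by
  refine summable_of_ne_finset_zero (s := Finset.range (P.natDegree + 1)) fun m hm => ?_
  rw [Finset.mem_range, not_lt] at hm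
  rw [Polynomial.coeff_coe, Polynomial.coeff_eq_zero_of_natDegree_lt (by omega)]
  simp

lemma ev_poly (P : ℝ[X]) (x : ℝ) : ev (↑P : PowerSeries ℝ) x = P.eval x := by
  unfold ev
  rw [tsum_eq_sum (s := Finset.range (P.natDegree + 1)) (fun m hm => by
    rw [Finset.mem_range, not_lt] at hm
    rw [Polynomial.coeff_coe, Polynomial.coeff_eq_zero_of_natDegree_lt (by omega)]
    simp)]
  rw [Polynomial.eval_eq_sum_range]
  exact Finset.sum_congr rfl fun m _ => by rw [Polynomial.coeff_coe]

/-- A formal algebraic relation gives a numerical relation at each point of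
absolute convergence. -/
lemma eval_relation (n : ℕ) (P : ℕ → ℝ[X]) (g : PowerSeries ℝ) (x : ℝ) (Hg : sAt g x)
    (hrel : ∑ i ∈ Finset.range (n + 1), (↑(P i) : PowerSeries ℝ) * g ^ i = 0) :
    ∑ i ∈ Finset.range (n + 1), (P i).eval x * (ev g x) ^ i = 0 := by
  have hterm : ∀ i ∈ Finset.range (n + 1),
      Summable (fun m : ℕ => (PowerSeries.coeff (R := ℝ) m ((↑(P i) : PowerSeries ℝ) * g ^ i)) * x ^ m) :=
    fun i _ => ((sAt_poly (P i) x).mul (sAt_pow Hg i)).of_norm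
  have h1 : ∀ i ∈ Finset.range (n + 1),
      (P i).eval x * (ev g x) ^ i = ev ((↑(P i) : PowerSeries ℝ) * g ^ i) x := by
    intro i _
    rw [ev_mul (sAt_poly (P i) x) (sAt_pow Hg i), ev_poly, ev_pow Hg]
  rw [Finset.sum_congr rfl h1]
  unfold ev
  rw [← Summable.tsum_finsetSum hterm]
  have : ∀ m : ℕ, (∑ i ∈ Finset.range (n + 1),
      (PowerSeries.coeff (R := ℝ) m ((↑(P i) : PowerSeries ℝ) * g ^ i)) * x ^ m) = 0 := by
    intro m
    rw [← Finset.sum_mul, ← map_sum, hrel]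
    simp
  rw [tsum_congr this]
  simp

/-! ### The golden ratio -/

def ph : ℝ := (1 + Real.sqrt 5) / 2
def x0 : ℝ := (Real.sqrt 5 - 1) / 2

lemma sqrt5_bounds : 2 < Real.sqrt 5 ∧ Real.sqrt 5 < 3 := by
  have h : Real.sqrt 5 ^ 2 = 5 := Real.sq_sqrt (by norm_num)
  constructor <;> nlinarith [Real.sqrt_nonneg 5]

lemma ph_pos : 0 < ph := by unfold ph; nlinarith [sqrt5_bounds.1]
lemma x0_pos : 0 < x0 := by unfold x0; nlinarith [sqrt5_bounds.1]
lemma x0_lt_one : x0 < 1 := by unfold x0; nlinarith [sqrt5_bounds.2]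
lemma ph_mul_x0 : ph * x0 = 1 := by
  have h : Real.sqrt 5 ^ 2 = 5 := Real.sq_sqrt (by norm_num)
  unfold ph x0; nlinarith

/-! ### Logarithmic asymptotics -/

lemma log_series {y : ℝ} (h0 : 0 ≤ y) (h1 : y < 1) :
    HasSum (fun m : ℕ => y ^ m / m) (-Real.log (1 - y)) := by
  have h := hasSum_pow_div_log_of_abs_lt_one (x := y) (by rw [abs_of_nonneg h0]; exact h1)
  have h2 : HasSum (fun n : ℕ => y ^ (n + 1) / ((n : ℝ) + 1)) (-Real.log (1 - y)) := by
    refine h.congr_fun fun n => by push_cast; ring_nf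
  have h3 : HasSum (fun n : ℕ => y ^ (n + 1) / (((n : ℕ) + 1 : ℕ) : ℝ))
      ((-Real.log (1 - y)) - ∑ i ∈ range 1, y ^ i / (i : ℝ)) := by
    simpa using h2
  exact (hasSum_nat_add_iff' 1).mp h3

lemma expaux (c : ℝ) (j : ℕ) :
    Tendsto (fun u : ℝ => Real.exp (-u) * (c + 3 * u) ^ j) atTop (𝓝 0) := by
  have hb : Tendsto (fun u : ℝ => (|c| + 3) ^ j * (u ^ j * Real.exp (-u))) atTop (𝓝 0) := by
    have := (tendsto_pow_mul_exp_neg_atTop_nhds_zero j).const_mul ((|c| + 3) ^ j)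
    simpa using this
  refine squeeze_zero' ?_ ?_ hb
  · filter_upwards [eventually_ge_atTop (max 1 |c|)] with u hu
    have h1 : (1:ℝ) ≤ u := le_trans (le_max_left _ _) hu
    have h2 : |c| ≤ u := le_trans (le_max_right _ _) hu
    have : 0 ≤ c + 3 * u := by
      have := neg_abs_le c; nlinarith
    positivity
  · filter_upwards [eventually_ge_atTop (max 1 |c|)] with u hu
    have h1 : (1:ℝ) ≤ u := le_trans (le_max_left _ _) hu
    have h2 : |c| ≤ u := le_trans (le_max_right _ _) hu
    have hc : c + 3 * u ≤ (|c| + 3) * u := by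
      have := le_abs_self c; nlinarith [abs_nonneg c]
    have h0 : 0 ≤ c + 3 * u := by have := neg_abs_le c; nlinarith
    have := pow_le_pow_left₀ h0 hc j
    rw [mul_pow] at this
    calc Real.exp (-u) * (c + 3 * u) ^ j
        ≤ Real.exp (-u) * ((|c| + 3) ^ j * u ^ j) :=
          mul_le_mul_of_nonneg_left this (Real.exp_nonneg _)
      _ = (|c| + 3) ^ j * (u ^ j * Real.exp (-u)) := by ring

lemma tlog (c : ℝ) (j : ℕ) :
    Tendsto (fun t : ℝ => t * (c + 3 * (-Real.log (ph * t))) ^ j) (𝓝[>] (0:ℝ)) (𝓝 0) := by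
  have hcomp : Tendsto (fun t : ℝ =>
      Real.exp (-(-Real.log t)) * ((c - 3 * Real.log ph) + 3 * (-Real.log t)) ^ j)
      (𝓝[>] (0:ℝ)) (𝓝 0) := by
    have hlog : Tendsto (fun t : ℝ => -Real.log t) (𝓝[>] (0:ℝ)) atTop :=
      tendsto_neg_atBot_atTop.comp Real.tendsto_log_nhdsGT_zero
    exact (expaux (c - 3 * Real.log ph) j).comp hlog
  refine hcomp.congr' ?_
  filter_upwards [self_mem_nhdsWithin] with t (ht : t ∈ Set.Ioi (0:ℝ))
  have ht0 : (0:ℝ) < t := ht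
  rw [neg_neg, Real.exp_log ht0, Real.log_mul (ne_of_gt ph_pos) (ne_of_gt ht0)]
  ring_nf

end Stmt15

end Stmt15Aux

set_option maxHeartbeats 1000000 in
open Stmt15 in
/-- a power series `f = Σ_{m≥1} a_m z^m` with natural number coefficients
satisfying the asymptotics `a_m ∼ (2/m)·((1+√5)/2)^m` is transcendental over `ℚ(z)`:
it satisfies no nonzero polynomial equation with polynomial (equivalently, rational
function) coefficients. -/
theorem stmt15 (a : ℕ → ℕ) (h0 : a 0 = 0)
    (hasym : Filter.Tendsto
      (fun m : ℕ => (a m : ℝ) / ((2 / (m : ℝ)) * ((1 + Real.sqrt 5) / 2) ^ m))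
      Filter.atTop (nhds 1)) :
    ¬ ∃ (n : ℕ) (p : ℕ → Polynomial ℚ), (∃ i ≤ n, p i ≠ 0) ∧
      ∑ i ∈ Finset.range (n + 1),
        (Polynomial.coeToPowerSeries.ringHom (p i))
          * (PowerSeries.mk fun m => (a m : ℚ)) ^ i = 0 := by
  rintro ⟨n, p, ⟨i₁, hi₁n, hi₁⟩, hrel⟩
  -- transfer the relation to ℝ
  set g : PowerSeries ℝ := PowerSeries.mk fun m => ((a m : ℝ)) with hgdef
  set P : ℕ → ℝ[X] := fun i => (p i).map (algebraMap ℚ ℝ) with hPdef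
  have hgc : ∀ m : ℕ, (PowerSeries.coeff (R := ℝ) m) g = (a m : ℝ) := fun m => PowerSeries.coeff_mk m _
  have hrelR : ∑ i ∈ Finset.range (n + 1), (↑(P i) : PowerSeries ℝ) * g ^ i = 0 := by
    have hmap := congrArg (PowerSeries.map (algebraMap ℚ ℝ)) hrel
    rw [map_sum, map_zero] at hmap
    rw [← hmap]
    refine Finset.sum_congr rfl fun i _ => ?_
    have e1 : (PowerSeries.map (algebraMap ℚ ℝ)) (Polynomial.coeToPowerSeries.ringHom (p i))
        = (↑(P i) : PowerSeries ℝ) := by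
      ext m
      simp [PowerSeries.coeff_map, Polynomial.coeff_coe, Polynomial.coeff_map,
        Polynomial.coeToPowerSeries.ringHom_apply, hPdef, eq_ratCast]
    have e2 : (PowerSeries.map (algebraMap ℚ ℝ)) (PowerSeries.mk fun m => (a m : ℚ)) = g := by
      ext m
      simp [PowerSeries.coeff_map, PowerSeries.coeff_mk, hgdef, eq_ratCast]
    rw [map_mul, map_pow, e1, e2]
  -- quantitative bounds from the asymptotics
  have hev : ∀ᶠ m : ℕ in atTop,
      ((a m : ℝ) / ((2 / (m:ℝ)) * ((1 + Real.sqrt 5) / 2) ^ m)) ∈ Set.Ioo (1/2 : ℝ) (3/2) :=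
    hasym.eventually (Ioo_mem_nhds (by norm_num) (by norm_num))
  obtain ⟨M1, hM1⟩ := eventually_atTop.mp hev
  set M : ℕ := max M1 1 with hMdef
  have key : ∀ m : ℕ, M ≤ m → ph ^ m / (m:ℝ) ≤ (a m : ℝ) ∧ (a m : ℝ) ≤ 3 * ph ^ m / (m:ℝ) := by
    intro m hm
    have hm1 : (1:ℝ) ≤ (m:ℝ) := by
      have : 1 ≤ m := le_trans (le_max_right M1 1) hm
      exact_mod_cast this
    have hmpos : (0:ℝ) < (m:ℝ) := lt_of_lt_of_le zero_lt_one hm1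
    have hphp : 0 < ph ^ m := pow_pos ph_pos m
    have hd : 0 < 2 / (m:ℝ) * ph ^ m := by positivity
    have hr := hM1 m (le_trans (le_max_left M1 1) hm)
    rw [Set.mem_Ioo] at hr
    have hphval : ((1 + Real.sqrt 5) / 2 : ℝ) = ph := rfl
    rw [hphval] at hr
    have ha : (a m : ℝ) = ((a m : ℝ) / (2 / (m:ℝ) * ph ^ m)) * (2 / (m:ℝ) * ph ^ m) :=
      (div_mul_cancel₀ _ (ne_of_gt hd)).symm
    have hhalf : ph ^ m / (m:ℝ) = (1/2) * (2 / (m:ℝ) * ph ^ m) := by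
      field_simp
    have h32 : 3 * ph ^ m / (m:ℝ) = (3/2) * (2 / (m:ℝ) * ph ^ m) := by
      field_simp
    constructor
    · calc ph ^ m / (m:ℝ) = (1/2) * (2 / (m:ℝ) * ph ^ m) := hhalf
        _ ≤ ((a m : ℝ) / (2 / (m:ℝ) * ph ^ m)) * (2 / (m:ℝ) * ph ^ m) :=
          mul_le_mul_of_nonneg_right hr.1.le hd.le
        _ = (a m : ℝ) := ha.symm
    · calc (a m : ℝ) = ((a m : ℝ) / (2 / (m:ℝ) * ph ^ m)) * (2 / (m:ℝ) * ph ^ m) := ha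
        _ ≤ (3/2) * (2 / (m:ℝ) * ph ^ m) := mul_le_mul_of_nonneg_right hr.2.le hd.le
        _ = 3 * ph ^ m / (m:ℝ) := h32.symm
  -- summability on (0, x0)
  have hsAt : ∀ {x : ℝ}, x ∈ Set.Ioo (0:ℝ) x0 → sAt g x := by
    intro x hx
    have hpx : ph * x < 1 := by
      have := mul_lt_mul_of_pos_left hx.2 ph_pos
      rwa [ph_mul_x0] at this
    have hpx0 : 0 ≤ ph * x := mul_nonneg ph_pos.le hx.1.le
    refine summable_of_isBigO_nat (summable_geometric_of_lt_one hpx0 hpx) ?_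
    refine Asymptotics.IsBigO.of_bound 3 ?_
    filter_upwards [eventually_ge_atTop M] with m hm
    have hub := (key m hm).2
    have hm1 : (1:ℝ) ≤ (m:ℝ) := by
      have : 1 ≤ m := le_trans (le_max_right M1 1) hm
      exact_mod_cast this
    have hxp : (0:ℝ) ≤ x ^ m := pow_nonneg hx.1.le m
    have h1 : (a m : ℝ) ≤ 3 * ph ^ m := by
      have : 3 * ph ^ m / (m:ℝ) ≤ 3 * ph ^ m := by
        rw [div_le_iff₀ (by linarith)]
        nlinarith [pow_pos ph_pos m]
      linarith
    have h2 : (a m : ℝ) * x ^ m ≤ 3 * (ph * x) ^ m := by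
      rw [mul_pow]
      calc (a m : ℝ) * x ^ m ≤ 3 * ph ^ m * x ^ m := by
            exact mul_le_mul_of_nonneg_right h1 hxp
        _ = 3 * (ph ^ m * x ^ m) := by ring
    have hpxm : (0:ℝ) ≤ (ph * x) ^ m := pow_nonneg hpx0 m
    have haxm : (0:ℝ) ≤ (a m : ℝ) * x ^ m := mul_nonneg (Nat.cast_nonneg _) hxp
    simp only [norm_norm, hgc, Real.norm_eq_abs, abs_of_nonneg haxm, abs_of_nonneg hpxm]
    linarith [h2]
  -- the evaluated series as a genuine sum
  have hevg : ∀ {x : ℝ}, ev g x = ∑' m : ℕ, (a m : ℝ) * x ^ m := by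
    intro x
    exact tsum_congr fun m => by rw [hgc]
  have hsumg : ∀ {x : ℝ}, x ∈ Set.Ioo (0:ℝ) x0 → Summable (fun m : ℕ => (a m : ℝ) * x ^ m) := by
    intro x hx
    have := (hsAt hx).of_norm
    exact this.congr fun m => by rw [hgc]
  set C0 : ℝ := ∑ i ∈ Finset.range M, (a i : ℝ) with hC0def
  -- upper bound by the logarithm
  have hFub : ∀ x ∈ Set.Ioo (0:ℝ) x0,
      ev g x ≤ C0 + 3 * (-Real.log (1 - ph * x)) := by
    intro x hx
    have hpx : ph * x < 1 := by
      have := mul_lt_mul_of_pos_left hx.2 ph_pos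
      rwa [ph_mul_x0] at this
    have hpx0 : 0 ≤ ph * x := mul_nonneg ph_pos.le hx.1.le
    have hx1 : x < 1 := lt_trans hx.2 x0_lt_one
    have hsum := hsumg hx
    have hshift : Summable (fun m : ℕ => (a (m + M) : ℝ) * x ^ (m + M)) :=
      (summable_nat_add_iff (f := fun m : ℕ => (a m : ℝ) * x ^ m) M).2 hsum
    have hsplit : (∑ i ∈ Finset.range M, (a i : ℝ) * x ^ i)
        + ∑' m : ℕ, (a (m + M) : ℝ) * x ^ (m + M) = ∑' m : ℕ, (a m : ℝ) * x ^ m :=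
      Summable.sum_add_tsum_nat_add' (f := fun m : ℕ => (a m : ℝ) * x ^ m) (k := M) hshift
    have hlog : HasSum (fun m : ℕ => (ph * x) ^ m / m) (-Real.log (1 - ph * x)) :=
      log_series hpx0 hpx
    have hlog3 : HasSum (fun m : ℕ => 3 * ((ph * x) ^ m / m)) (3 * (-Real.log (1 - ph * x))) :=
      hlog.mul_left 3
    have hhead : (∑ i ∈ Finset.range M, (a i : ℝ) * x ^ i) ≤ C0 := by
      refine Finset.sum_le_sum fun i _ => ?_
      have hxi : x ^ i ≤ 1 := pow_le_one₀ hx.1.le hx1.le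
      have : (a i : ℝ) * x ^ i ≤ (a i : ℝ) * 1 :=
        mul_le_mul_of_nonneg_left hxi (Nat.cast_nonneg _)
      simpa using this
    have htail : (∑' m : ℕ, (a (m + M) : ℝ) * x ^ (m + M))
        ≤ ∑' m : ℕ, 3 * ((ph * x) ^ m / m) := by
      refine Summable.tsum_le_tsum_of_inj (fun m => m + M) (add_left_injective M) ?_ ?_ hshift
        hlog3.summable
      · intro c _
        positivity
      · intro m
        have hk := (key (m + M) (Nat.le_add_left M m)).2
        have hxp : (0:ℝ) ≤ x ^ (m + M) := pow_nonneg hx.1.le _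
        calc (a (m + M) : ℝ) * x ^ (m + M) ≤ (3 * ph ^ (m + M) / (m + M : ℕ)) * x ^ (m + M) :=
              mul_le_mul_of_nonneg_right hk hxp
          _ = 3 * ((ph * x) ^ (m + M) / ((m + M : ℕ) : ℝ)) := by
              rw [mul_pow]; ring
    calc ev g x = ∑' m : ℕ, (a m : ℝ) * x ^ m := hevg
      _ = (∑ i ∈ Finset.range M, (a i : ℝ) * x ^ i)
          + ∑' m : ℕ, (a (m + M) : ℝ) * x ^ (m + M) := hsplit.symm
      _ ≤ C0 + ∑' m : ℕ, 3 * ((ph * x) ^ m / m) := add_le_add hhead htail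
      _ = C0 + 3 * (-Real.log (1 - ph * x)) := by rw [hlog3.tsum_eq]
  -- the left-filter at x0
  set l : Filter ℝ := nhdsWithin x0 (Set.Iio x0) with hldef
  have hIoo : Set.Ioo (0:ℝ) x0 ∈ l := Ioo_mem_nhdsLT_of_mem ⟨x0_pos, le_refl x0⟩
  -- divergence of the sum at x0
  have hFat : Tendsto (fun x => ev g x) l atTop := by
    rw [tendsto_atTop]
    intro K
    -- pick N such that the harmonic block sum is large
    obtain ⟨N, hMN, hNsum⟩ : ∃ N : ℕ, M < N ∧
        2 * (|K| + 1) ≤ ∑ m ∈ Finset.Ico M N, (1:ℝ) / m := by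
      obtain ⟨N0, hN0⟩ := eventually_atTop.mp
        (tendsto_sum_range_one_div_nat_succ_atTop.eventually_ge_atTop
          (2 * (|K| + 1) + ∑ i ∈ Finset.range M, (1:ℝ)/((i:ℝ)+1)))
      refine ⟨max N0 (M+1), lt_of_lt_of_le (Nat.lt_succ_self M) (le_max_right _ _), ?_⟩
      set N : ℕ := max N0 (M+1) with hNdef
      have hTN : 2 * (|K| + 1) + ∑ i ∈ Finset.range M, (1:ℝ)/((i:ℝ)+1)
          ≤ ∑ i ∈ Finset.range N, (1:ℝ)/((i:ℝ)+1) := by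
        refine le_trans (hN0 N0 le_rfl) ?_
        refine Finset.sum_le_sum_of_subset_of_nonneg
          (Finset.range_subset_range.2 (le_max_left _ _)) ?_
        intro i _ _
        positivity
      have hsplit2 : (∑ i ∈ Finset.range M, (1:ℝ)/((i:ℝ)+1))
          + ∑ i ∈ Finset.Ico M N, (1:ℝ)/((i:ℝ)+1)
          = ∑ i ∈ Finset.range N, (1:ℝ)/((i:ℝ)+1) :=
        Finset.sum_range_add_sum_Ico _ (le_trans (Nat.le_succ M) (le_max_right _ _))
      have hstep : (∑ i ∈ Finset.Ico M N, (1:ℝ)/((i:ℝ)+1))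
          ≤ ∑ m ∈ Finset.Ico M N, (1:ℝ)/(m:ℝ) := by
        refine Finset.sum_le_sum fun i hi => ?_
        have h1i : 1 ≤ i := le_trans (le_max_right M1 1) (Finset.mem_Ico.1 hi).1
        have hipos : (0:ℝ) < (i:ℝ) := by exact_mod_cast Nat.lt_of_lt_of_le Nat.zero_lt_one h1i
        exact one_div_le_one_div_of_le hipos (by linarith)
      linarith
    have hpow : Tendsto (fun x : ℝ => (ph*x)^N) l (𝓝 1) := by
      have hc : Continuous fun x : ℝ => (ph*x)^N := by continuity
      have h2 := (hc.tendsto x0).mono_left (nhdsWithin_le_nhds (s := Set.Iio x0))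
      have : (ph*x0)^N = 1 := by rw [ph_mul_x0, one_pow]
      rwa [this] at h2
    have hev2 : ∀ᶠ x in l, (1/2 : ℝ) ≤ (ph*x)^N :=
      hpow.eventually (eventually_ge_nhds (by norm_num : (1/2:ℝ) < 1))
    filter_upwards [hIoo, hev2] with x hx hpxN
    have hpx : ph * x < 1 := by
      have := mul_lt_mul_of_pos_left hx.2 ph_pos
      rwa [ph_mul_x0] at this
    have hpx0 : 0 ≤ ph * x := mul_nonneg ph_pos.le hx.1.le
    have hsum := hsumg hx
    have hblock : ∑ m ∈ Finset.Ico M N, (a m:ℝ) * x^m ≤ ev g x := by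
      rw [hevg]
      exact Summable.sum_le_tsum _
        (fun m _ => mul_nonneg (Nat.cast_nonneg _) (pow_nonneg hx.1.le m)) hsum
    have hterm2 : ∀ m ∈ Finset.Ico M N, (1/2:ℝ) * (1/(m:ℝ)) ≤ (a m:ℝ) * x^m := by
      intro m hmm
      obtain ⟨hmM, hmN⟩ := Finset.mem_Ico.1 hmm
      have hkey := (key m hmM).1
      have hpow_ge : (ph*x)^N ≤ (ph*x)^m :=
        pow_le_pow_of_le_one hpx0 hpx.le hmN.le
      have h1m : 1 ≤ m := le_trans (le_max_right M1 1) hmM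
      have hmpos : (0:ℝ) < (m:ℝ) := by exact_mod_cast Nat.lt_of_lt_of_le Nat.zero_lt_one h1m
      calc (1/2:ℝ) * (1/(m:ℝ)) ≤ (ph*x)^m * (1/(m:ℝ)) := by
            have h12 : (1/2:ℝ) ≤ (ph*x)^m := le_trans hpxN hpow_ge
            exact mul_le_mul_of_nonneg_right h12 (by positivity)
        _ = (ph^m/(m:ℝ)) * x^m := by rw [mul_pow]; ring
        _ ≤ (a m:ℝ) * x^m :=
            mul_le_mul_of_nonneg_right hkey (pow_nonneg hx.1.le m)
    have hsum2 : (1/2:ℝ) * ∑ m ∈ Finset.Ico M N, (1:ℝ)/(m:ℝ)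
        ≤ ∑ m ∈ Finset.Ico M N, (a m:ℝ)*x^m := by
      rw [Finset.mul_sum]
      exact Finset.sum_le_sum hterm2
    have habs := le_abs_self K
    linarith [hblock, hsum2, hNsum]
  have hF1 : ∀ᶠ x in l, (1:ℝ) ≤ ev g x := hFat.eventually_ge_atTop 1
  -- (x0 - x) * F(x)^j → 0
  have hzero : ∀ j : ℕ, Tendsto (fun x => (x0 - x) * (ev g x)^j) l (𝓝 0) := by
    intro j
    have hsub : Tendsto (fun x : ℝ => x0 - x) l (𝓝[>] (0:ℝ)) := by
      rw [tendsto_nhdsWithin_iff]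
      constructor
      · have h2 : Tendsto (fun x : ℝ => x0 - x) (𝓝 x0) (𝓝 (x0 - x0)) :=
          (continuous_const.sub continuous_id).tendsto x0
        rw [sub_self] at h2
        exact h2.mono_left (nhdsWithin_le_nhds (s := Set.Iio x0))
      · filter_upwards [self_mem_nhdsWithin] with x hx
        exact sub_pos.2 (Set.mem_Iio.mp hx)
    have hB : Tendsto (fun x => (x0 - x) * (C0 + 3 * (-Real.log (ph * (x0 - x))))^j) l (𝓝 0) :=
      (tlog C0 j).comp hsub
    refine squeeze_zero' ?_ ?_ hB
    · filter_upwards [hIoo, hF1] with x hx h1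
      have hF0 : (0:ℝ) ≤ ev g x := le_trans zero_le_one h1
      have hx0 : (0:ℝ) ≤ x0 - x := sub_nonneg.2 hx.2.le
      positivity
    · filter_upwards [hIoo, hF1] with x hx h1
      have hle : ev g x ≤ C0 + 3*(-Real.log (1 - ph*x)) := hFub x hx
      have h1mp : 1 - ph*x = ph*(x0-x) := by
        rw [mul_sub, ph_mul_x0]
      rw [h1mp] at hle
      have h0F : 0 ≤ ev g x := le_trans zero_le_one h1
      have hpows := pow_le_pow_left₀ h0F hle j
      exact mul_le_mul_of_nonneg_left hpows (sub_nonneg.2 hx.2.le)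
  -- pointwise algebraic relation
  have hrelx : ∀ x ∈ Set.Ioo (0:ℝ) x0,
      ∑ i ∈ Finset.range (n+1), (P i).eval x * (ev g x)^i = 0 :=
    fun x hx => eval_relation n P g x (hsAt hx) hrelR
  -- divide out the common root at x0
  set s0 : Finset ℕ := (Finset.range (n+1)).filter (fun i => P i ≠ 0) with hs0def
  have hs0ne : s0.Nonempty := by
    refine ⟨i₁, Finset.mem_filter.2 ⟨Finset.mem_range.2 (by omega), ?_⟩⟩
    exact Polynomial.map_ne_zero hi₁
  set k : ℕ := s0.inf' hs0ne (fun i => Polynomial.rootMultiplicity x0 (P i)) with hkdef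
  obtain ⟨i0, hi0mem, hi0min⟩ := Finset.exists_mem_eq_inf' hs0ne
    (fun i => Polynomial.rootMultiplicity x0 (P i))
  set D : ℝ[X] := (Polynomial.X - Polynomial.C x0)^k with hDdef
  have hD : D.Monic := (Polynomial.monic_X_sub_C x0).pow k
  set Q : ℕ → ℝ[X] := fun i => (P i) /ₘ D with hQdef
  have hfac : ∀ i ∈ Finset.range (n+1), P i = D * Q i := by
    intro i hi
    by_cases h : P i = 0
    · simp [hQdef, h, Polynomial.zero_divByMonic]
    · have hk : k ≤ Polynomial.rootMultiplicity x0 (P i) :=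
        Finset.inf'_le _ (Finset.mem_filter.2 ⟨hi, h⟩)
      have hdvd : D ∣ P i :=
        dvd_trans (pow_dvd_pow _ hk) (Polynomial.pow_rootMultiplicity_dvd (P i) x0)
      have hmd := Polynomial.modByMonic_add_div (P i) D
      rw [(Polynomial.modByMonic_eq_zero_iff_dvd hD).2 hdvd, zero_add] at hmd
      exact hmd.symm
  have hQi0 : (Q i0).eval x0 ≠ 0 := by
    have hi0r : i0 ∈ Finset.range (n+1) := (Finset.mem_filter.1 hi0mem).1
    have hPi0ne : P i0 ≠ 0 := (Finset.mem_filter.1 hi0mem).2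
    have hfaci0 : P i0 = D * Q i0 := hfac i0 hi0r
    have hQne : Q i0 ≠ 0 := by
      intro h
      rw [h, mul_zero] at hfaci0
      exact hPi0ne hfaci0
    have hrm : Polynomial.rootMultiplicity x0 (P i0)
        = k + Polynomial.rootMultiplicity x0 (Q i0) := by
      rw [hfaci0, Polynomial.rootMultiplicity_mul (by rw [← hfaci0]; exact hPi0ne)]
      congr 1
      rw [hDdef, Polynomial.rootMultiplicity_X_sub_C_pow]
    have hk0 : Polynomial.rootMultiplicity x0 (Q i0) = 0 := by omega
    intro hroot
    have := Polynomial.rootMultiplicity_eq_zero_iff.1 hk0 hroot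
    exact hQne this
  -- pointwise relation for the reduced polynomials
  have hrelQ : ∀ x ∈ Set.Ioo (0:ℝ) x0,
      ∑ i ∈ Finset.range (n+1), (Q i).eval x * (ev g x)^i = 0 := by
    intro x hx
    have h := hrelx x hx
    have hxne : (x - x0) ≠ 0 := sub_ne_zero.2 (ne_of_lt hx.2)
    have hDx : D.eval x = (x - x0)^k := by
      rw [hDdef]
      simp [Polynomial.eval_pow]
    have hfactor : (x - x0)^k * (∑ i ∈ Finset.range (n+1), (Q i).eval x * (ev g x)^i) = 0 := by
      rw [Finset.mul_sum]
      rw [← h]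
      refine Finset.sum_congr rfl fun i hi => ?_
      rw [hfac i hi, Polynomial.eval_mul, hDx]
      ring
    exact (mul_eq_zero.1 hfactor).resolve_left (pow_ne_zero _ hxne)
  -- the top index where the reduced polynomial does not vanish at x0
  set s1 : Finset ℕ := (Finset.range (n+1)).filter (fun i => (Q i).eval x0 ≠ 0) with hs1def
  have hs1ne : s1.Nonempty :=
    ⟨i0, Finset.mem_filter.2 ⟨(Finset.mem_filter.1 hi0mem).1, hQi0⟩⟩
  set iS : ℕ := s1.max' hs1ne with hiSdef
  have hiSmem : iS ∈ s1 := s1.max'_mem hs1ne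
  have hiSrange : iS ∈ Finset.range (n+1) := (Finset.mem_filter.1 hiSmem).1
  have hQiS : (Q iS).eval x0 ≠ 0 := (Finset.mem_filter.1 hiSmem).2
  have hhigh : ∀ i ∈ Finset.range (n+1), iS < i → (Q i).eval x0 = 0 := by
    intro i hi hlt
    by_contra hne
    exact absurd (s1.le_max' i (Finset.mem_filter.2 ⟨hi, hne⟩)) (not_le.2 hlt)
  set F : ℝ → ℝ := fun x => ev g x with hFdef
  set H : ℝ → ℝ := fun x =>
    ∑ i ∈ Finset.range (n+1), (Q i).eval x * F x ^ i * (F x ^ iS)⁻¹ with hHdef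
  have hH0 : ∀ᶠ x in l, H x = 0 := by
    filter_upwards [hIoo] with x hx
    have hr := hrelQ x hx
    simp only [hHdef]
    rw [← Finset.sum_mul, hr, zero_mul]
  have hFne : ∀ᶠ x in l, F x ≠ 0 := by
    filter_upwards [hF1] with x h1
    exact ne_of_gt (lt_of_lt_of_le zero_lt_one h1)
  have hterm : ∀ i ∈ Finset.range (n+1),
      Tendsto (fun x => (Q i).eval x * F x ^ i * (F x ^ iS)⁻¹) l
        (𝓝 (if i = iS then (Q iS).eval x0 else 0)) := by
    intro i hi
    have hQc : Tendsto (fun x => (Q i).eval x) l (𝓝 ((Q i).eval x0)) :=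
      ((Q i).continuous.tendsto x0).mono_left (nhdsWithin_le_nhds (s := Set.Iio x0))
    rcases lt_trichotomy i iS with hlt | heq | hgt
    · rw [if_neg (ne_of_lt hlt)]
      have hinv : Tendsto (fun x => ((F x)⁻¹) ^ (iS - i)) l (𝓝 0) := by
        have h1 : Tendsto (fun x => (F x) ^ (iS - i)) l atTop :=
          (tendsto_pow_atTop (by omega : iS - i ≠ 0)).comp hFat
        have h2 := h1.inv_tendsto_atTop
        exact h2.congr fun x => by
          simp [Pi.inv_apply, Function.comp, inv_pow]
      have hmul := hQc.mul hinv
      rw [mul_zero] at hmul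
      refine Tendsto.congr' ?_ hmul
      filter_upwards [hFne] with x hF
      have hFine : F x ^ i ≠ 0 := pow_ne_zero _ hF
      have hpow : F x ^ iS = F x ^ i * F x ^ (iS - i) := by
        rw [← pow_add]; congr 1; omega
      have heq2 : (Q i).eval x * F x ^ i * (F x ^ iS)⁻¹
          = (Q i).eval x * ((F x)⁻¹) ^ (iS - i) := by
        rw [inv_pow, hpow, mul_inv, mul_assoc, ← mul_assoc (F x ^ i),
          mul_inv_cancel₀ hFine, one_mul]
      exact heq2.symm
    · subst heq
      rw [if_pos rfl]
      refine Tendsto.congr' ?_ hQc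
      filter_upwards [hFne] with x hF
      have heq2 : (Q iS).eval x * F x ^ iS * (F x ^ iS)⁻¹ = (Q iS).eval x := by
        rw [mul_assoc, mul_inv_cancel₀ (pow_ne_zero _ hF), mul_one]
      exact heq2.symm
    · rw [if_neg (by omega : ¬ i = iS)]
      have hroot : (Q i).eval x0 = 0 := hhigh i hi hgt
      obtain ⟨R, hR⟩ := Polynomial.dvd_iff_isRoot.2 hroot
      have hRc : Tendsto (fun x => R.eval x) l (𝓝 (R.eval x0)) :=
        (R.continuous.tendsto x0).mono_left (nhdsWithin_le_nhds (s := Set.Iio x0))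
      have hz := (hzero (i - iS)).neg
      have hmul := hRc.mul hz
      rw [neg_zero, mul_zero] at hmul
      refine Tendsto.congr' ?_ hmul
      filter_upwards [hFne] with x hF
      have hFiS : F x ^ iS ≠ 0 := pow_ne_zero _ hF
      have hpow : F x ^ i = F x ^ iS * F x ^ (i - iS) := by
        rw [← pow_add]; congr 1; omega
      have hQx : (Q i).eval x = (x - x0) * R.eval x := by
        rw [hR]
        simp [Polynomial.eval_mul]
      rw [hQx, hpow]
      field_simp
      ring
  have hsum3 := tendsto_finset_sum (Finset.range (n+1)) hterm
  have hval : (∑ i ∈ Finset.range (n+1), if i = iS then (Q iS).eval x0 else 0)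
      = (Q iS).eval x0 := by
    rw [Finset.sum_ite_eq' (Finset.range (n+1)) iS (fun _ => (Q iS).eval x0),
      if_pos hiSrange]
  have hHlim : Tendsto H l (𝓝 ((Q iS).eval x0)) := by
    rw [← hval]
    exact hsum3
  have hH0' : Tendsto H l (𝓝 0) := by
    refine Tendsto.congr' ?_ tendsto_const_nhds
    filter_upwards [hH0] with x hx
    exact hx.symm
  exact hQiS (tendsto_nhds_unique hHlim hH0')
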